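/- Let S be a set, G a group, Q_S the free quandle on S (the quotient of S × F(S) by (a,w₁) ∼ (b,w₂) iff a = b and w₂ = aᵏw₁ for some k ∈ ℤ, with operation [(a,w)] ▷ [(b,z)] = [(a, w z⁻¹ b z)]), and ι : S → Q_S the map a ↦ [(a, 1)]. For any function f : S → G, there exists a unique quandle homomorphism f̄ : Q_S → conj(G) such that f̄ ∘ ι = f, where conj(G) is G with operation x ▷ y := y⁻¹ x y. -/

import Mathlib

def triOp {S : Type*} (p q : S × FreeGroup S) : S × FreeGroup S :=
  (p.1, p.2 * q.2⁻¹ * FreeGroup.of q.1 * q.2)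

def triOpInv {S : Type*} (p q : S × FreeGroup S) : S × FreeGroup S :=
  (p.1, p.2 * q.2⁻¹ * (FreeGroup.of q.1)⁻¹ * q.2)

def simQ {S : Type*} (p q : S × FreeGroup S) : Prop :=
  p.1 = q.1 ∧ ∃ k : ℤ, q.2 = (FreeGroup.of p.1) ^ k * p.2

theorem simQ_equiv (S : Type*) : Equivalence (@simQ S) where
  refl p := ⟨rfl, 0, by simp⟩
  symm {p q} h := by
    obtain ⟨h1, k, hk⟩ := h
    exact ⟨h1.symm, -k, by rw [← h1, hk]; group⟩
  trans {p q r} h h' := by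
    obtain ⟨h1, k, hk⟩ := h
    obtain ⟨h2, l, hl⟩ := h'
    refine ⟨h1.trans h2, l + k, ?_⟩
    rw [hl, hk, ← h1]
    group

instance simSetoid (S : Type*) : Setoid (S × FreeGroup S) :=
  ⟨simQ, simQ_equiv S⟩

theorem simQ_triOp_cong {S : Type*} {p p' q q' : S × FreeGroup S}
    (h : simQ p p') (h' : simQ q q') : simQ (triOp p q) (triOp p' q') := by
  obtain ⟨h1, k, hk⟩ := h
  obtain ⟨h2, l, hl⟩ := h'
  refine ⟨h1, k, ?_⟩
  simp only [triOp, hk, hl, ← h1, ← h2]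
  group

theorem simQ_triOpInv_cong {S : Type*} {p p' q q' : S × FreeGroup S}
    (h : simQ p p') (h' : simQ q q') : simQ (triOpInv p q) (triOpInv p' q') := by
  obtain ⟨h1, k, hk⟩ := h
  obtain ⟨h2, l, hl⟩ := h'
  refine ⟨h1, k, ?_⟩
  simp only [triOpInv, hk, hl, ← h1, ← h2]
  group

/-- The free quandle on S as a quotient. -/
def FreeQuandle (S : Type*) : Type _ := Quotient (simSetoid S)

def fqOp {S : Type*} (x y : FreeQuandle S) : FreeQuandle S :=
  Quotient.map₂ triOp (fun _ _ h _ _ h' => simQ_triOp_cong h h') x y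

def fqOpInv {S : Type*} (x y : FreeQuandle S) : FreeQuandle S :=
  Quotient.map₂ triOpInv (fun _ _ h _ _ h' => simQ_triOpInv_cong h h') x y

/-- The canonical inclusion of S into the free quandle. -/
def fqIota {S : Type*} (a : S) : FreeQuandle S := Quotient.mk _ (a, 1)

/-- universal property of the free quandle with respect to
conjugation quandles: every map f : S → G extends uniquely to a quandle
homomorphism Q_S → conj(G). -/
theorem freeQuandle_universal_property {S G : Type*} [Group G] (f : S → G) :
    ∃! fbar : FreeQuandle S → G,
      (∀ x y : FreeQuandle S, fbar (fqOp x y) = (fbar y)⁻¹ * fbar x * fbar y) ∧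
      (∀ x y : FreeQuandle S, fbar (fqOpInv x y) = fbar y * fbar x * (fbar y)⁻¹) ∧
      (∀ a : S, fbar (fqIota a) = f a) := by
  classical
  set F : FreeGroup S →* G := FreeGroup.lift f with hF
  have hwd : ∀ p q : S × FreeGroup S, simQ p q →
      (F p.2)⁻¹ * f p.1 * F p.2 = (F q.2)⁻¹ * f q.1 * F q.2 := by
    rintro ⟨a, w⟩ ⟨b, z⟩ ⟨h1, k, hk⟩
    simp only at h1 hk
    subst h1
    simp only [hF] at hk ⊢
    rw [hk, map_mul, map_zpow, FreeGroup.lift_apply_of]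
    have hc : (f a) ^ k * f a = f a * (f a) ^ k :=
      (Commute.self_zpow (f a) k).symm
    rw [mul_inv_rev, mul_assoc, mul_assoc, ← mul_assoc (f a), ← hc]
    group
  refine ⟨Quotient.lift (fun p : S × FreeGroup S => (F p.2)⁻¹ * f p.1 * F p.2) hwd,
    ⟨?_, ?_, ?_⟩, ?_⟩
  · rintro ⟨⟨a, w⟩⟩ ⟨⟨b, z⟩⟩
    show (F (w * z⁻¹ * FreeGroup.of b * z))⁻¹ * f a * F (w * z⁻¹ * FreeGroup.of b * z)
      = ((F z)⁻¹ * f b * F z)⁻¹ * ((F w)⁻¹ * f a * F w) * ((F z)⁻¹ * f b * F z)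
    simp only [hF, map_mul, map_inv, FreeGroup.lift_apply_of]
    group
  · rintro ⟨⟨a, w⟩⟩ ⟨⟨b, z⟩⟩
    show (F (w * z⁻¹ * (FreeGroup.of b)⁻¹ * z))⁻¹ * f a * F (w * z⁻¹ * (FreeGroup.of b)⁻¹ * z)
      = ((F z)⁻¹ * f b * F z) * ((F w)⁻¹ * f a * F w) * ((F z)⁻¹ * f b * F z)⁻¹
    simp only [hF, map_mul, map_inv, FreeGroup.lift_apply_of]
    group
  · intro a
    show (F 1)⁻¹ * f a * F 1 = f a
    simp
  · rintro g ⟨h1, h2, h3⟩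
    have key : ∀ l : List (S × Bool), ∀ a : S,
        g (Quotient.mk _ (a, FreeGroup.mk l)) =
          (F (FreeGroup.mk l))⁻¹ * f a * F (FreeGroup.mk l) := by
      intro l
      induction l using List.reverseRecOn with
      | nil =>
        intro a
        have : FreeGroup.mk ([] : List (S × Bool)) = 1 := rfl
        rw [this]
        simpa [fqIota] using h3 a
      | append_singleton l x ih =>
        intro a
        obtain ⟨b, bb⟩ := x
        have hsplit : FreeGroup.mk (l ++ [(b, bb)]) =
            FreeGroup.mk l * FreeGroup.mk [(b, bb)] := by
          rw [FreeGroup.mul_mk]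
        cases bb
        · have hb : (FreeGroup.mk [(b, false)] : FreeGroup S) = (FreeGroup.of b)⁻¹ := by
            rfl
          have hop : fqOpInv (Quotient.mk _ (a, FreeGroup.mk l)) (fqIota b) =
              Quotient.mk _ (a, FreeGroup.mk (l ++ [(b, false)])) := by
            apply Quotient.sound
            refine ⟨rfl, 0, ?_⟩
            simp [triOpInv, hsplit, hb]
          have := h2 (Quotient.mk _ (a, FreeGroup.mk l)) (fqIota b)
          rw [hop] at this
          rw [this, ih, h3, hsplit, hb]
          simp only [hF, map_mul, map_inv, FreeGroup.lift_apply_of]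
          group
        · have hb : (FreeGroup.mk [(b, true)] : FreeGroup S) = FreeGroup.of b := rfl
          have hop : fqOp (Quotient.mk _ (a, FreeGroup.mk l)) (fqIota b) =
              Quotient.mk _ (a, FreeGroup.mk (l ++ [(b, true)])) := by
            apply Quotient.sound
            refine ⟨rfl, 0, ?_⟩
            simp [triOp, hsplit, hb]
          have := h1 (Quotient.mk _ (a, FreeGroup.mk l)) (fqIota b)
          rw [hop] at this
          rw [this, ih, h3, hsplit, hb]
          simp only [hF, map_mul, map_inv, FreeGroup.lift_apply_of]
          group
    funext x
    induction x using Quotient.ind with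
    | _ p =>
      obtain ⟨a, w⟩ := p
      have : w = FreeGroup.mk w.toWord := (FreeGroup.mk_toWord).symm
      rw [this]
      exact key w.toWord a
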